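/- In a plane graph, a strongly 1-sided Hamiltonian path starting with a given edge is unique if it exists: given a partial path v_1,…,v_i (i ≥ 2), the next vertex v_{i+1} is forced to be the other endpoint of the first edge, in counterclockwise order around v_i starting after (v_{i−1},v_i), whose other endpoint is not on the path. -/

import Mathlib

variable {V : Type*}

/-- `l` is a strongly 1-sided Hamiltonian path of the plane graph `G` whose
embedding is given by the rotation predicate `cw` (`cw v a b c` means that the
neighbours `a`, `b`, `c` appear in this clockwise order around `v`):
`l` is a Hamiltonian path and every edge from `l_i` (`i ≥ 1`) to a vertex `u`
occurring later on the path leaves `l_i` on the left side, i.e. between the path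
edges `(l_{i−1}, l_i)` and `(l_i, l_{i+1})` in clockwise order around `l_i`. -/
def OneSidedHamPath (G : SimpleGraph V) (cw : V → V → V → V → Prop)
    (l : List V) : Prop :=
  l.Nodup ∧ (∀ v : V, v ∈ l) ∧ l.Chain' G.Adj ∧
  ∀ i : ℕ, 1 ≤ i → ∀ h : i + 1 < l.length,
    ∀ u : V, G.Adj (l.get ⟨i, by omega⟩) u → u ∉ l.take (i + 2) →
      cw (l.get ⟨i, by omega⟩) (l.get ⟨i - 1, by omega⟩) u (l.get ⟨i + 1, h⟩)

/-- In a plane graph, a strongly 1-sided Hamiltonian path starting with a given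
edge is unique if it exists: after the first edge, every subsequent vertex is
forced. Here `cw` is the clockwise rotation system of the plane embedding. -/
theorem oneSidedHamPath_unique (G : SimpleGraph V) (cw : V → V → V → V → Prop)
    (hcyc : ∀ v a b c, cw v a b c → cw v b c a)
    (hasym : ∀ v a b c, cw v a b c → ¬ cw v a c b)
    (htot : ∀ v a b c, G.Adj v a → G.Adj v b → G.Adj v c →
      a ≠ b → b ≠ c → a ≠ c → cw v a b c ∨ cw v a c b)
    (htrans : ∀ v a b c d, cw v a b c → cw v a c d → cw v a b d)
    (l₁ l₂ : List V)
    (h₁ : OneSidedHamPath G cw l₁) (h₂ : OneSidedHamPath G cw l₂)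
    (hstart : l₁.take 2 = l₂.take 2) :
    l₁ = l₂ := by
  obtain ⟨hn₁, hm₁, hc₁, hs₁⟩ := h₁
  obtain ⟨hn₂, hm₂, hc₂, hs₂⟩ := h₂
  have hlen : l₁.length = l₂.length := by
    have p1 : l₁.Subperm l₂ := List.subperm_of_subset hn₁ (fun x _ => hm₂ x)
    have p2 : l₂.Subperm l₁ := List.subperm_of_subset hn₂ (fun x _ => hm₁ x)
    exact (p1.antisymm p2).length_eq
  have key : ∀ k, l₁.take k = l₂.take k := by
    intro k
    induction k with
    | zero => simp
    | succ k ih =>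
      rcases le_or_gt (k + 1) 2 with hk2 | hk2
      · calc l₁.take (k + 1) = (l₁.take 2).take (k + 1) := by
              rw [List.take_take]; congr 1; omega
          _ = (l₂.take 2).take (k + 1) := by rw [hstart]
          _ = l₂.take (k + 1) := by rw [List.take_take]; congr 1; omega
      · rcases le_or_gt l₁.length k with hk | hk
        · have h12 : l₁ = l₂ := by
            rw [← List.take_of_length_le hk, ih,
              List.take_of_length_le (by omega)]
          rw [h12]
        · -- k ≥ 2, k < l₁.length
          have hk₂ : k < l₂.length := hlen ▸ hk
          -- equality of earlier elements
          have hget : ∀ j (hj : j < k), l₁[j]'(by omega) = l₂[j]'(by omega) := by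
            intro j hj
            have h1 : (l₁.take k)[j]'(by simp; omega) = l₁[j]'(by omega) :=
              List.getElem_take
            have h2 : (l₂.take k)[j]'(by simp; omega) = l₂[j]'(by omega) :=
              List.getElem_take
            rw [← h1, ← h2]
            simp only [ih]
          have hne : l₁[k]'hk = l₂[k]'hk₂ → l₁.take (k + 1) = l₂.take (k + 1) := by
            intro he
            rw [List.take_succ, List.take_succ, ih,
              List.getElem?_eq_getElem hk, List.getElem?_eq_getElem hk₂, he]
          apply hne
          by_contra hab
          set a := l₁[k]'hk with ha
          set b := l₂[k]'hk₂ with hb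
          have hkk : k - 1 + 1 = k := by omega
          -- adjacency of v = l₁[k-1] = l₂[k-1] with a and b
          have hv : l₁[k-1]'(by omega) = l₂[k-1]'(by omega) := hget _ (by omega)
          have hp : l₁[k-2]'(by omega) = l₂[k-2]'(by omega) := hget _ (by omega)
          have hadj₁ : G.Adj (l₁[k-1]'(by omega)) a := by
            have := (List.isChain_iff_getElem.mp hc₁) (k-1) (by omega)
            simpa [List.get_eq_getElem, hkk] using this
          have hadj₂ : G.Adj (l₂[k-1]'(by omega)) b := by
            have := (List.isChain_iff_getElem.mp hc₂) (k-1) (by omega)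
            simpa [List.get_eq_getElem, hkk] using this
          -- b not among first k+1 elements of l₁
          have hbmem : b ∉ l₁.take (k + 1) := by
            intro hmem
            rw [List.take_succ, List.getElem?_eq_getElem hk] at hmem
            simp only [List.mem_append, Option.toList_some, List.mem_singleton] at hmem
            rcases hmem with hmem | hmem
            · rw [ih] at hmem
              obtain ⟨j, hj, hje⟩ := List.mem_take_iff_getElem.mp hmem
              have : j = k := (hn₂.getElem_inj_iff).mp (hje.trans hb)
              omega
            · exact hab hmem.symm
          have hamem : a ∉ l₂.take (k + 1) := by
            intro hmem
            rw [List.take_succ, List.getElem?_eq_getElem hk₂] at hmem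
            simp only [List.mem_append, Option.toList_some, List.mem_singleton] at hmem
            rcases hmem with hmem | hmem
            · rw [← ih] at hmem
              obtain ⟨j, hj, hje⟩ := List.mem_take_iff_getElem.mp hmem
              have : j = k := (hn₁.getElem_inj_iff).mp (hje.trans ha)
              omega
            · exact hab hmem
          have hcw₁ := hs₁ (k-1) (by omega) (by omega) b
            (by simp only [List.get_eq_getElem]; rw [hv]; exact hadj₂)
            (by rw [show k - 1 + 2 = k + 1 by omega]; exact hbmem)
          have hcw₂ := hs₂ (k-1) (by omega) (by omega) a
            (by simp only [List.get_eq_getElem]; rw [← hv]; exact hadj₁)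
            (by rw [show k - 1 + 2 = k + 1 by omega]; exact hamem)
          have e : k - 1 - 1 = k - 2 := by omega
          simp only [List.get_eq_getElem, hkk, e] at hcw₁ hcw₂
          rw [← hv, ← hp] at hcw₂
          exact hasym _ _ _ _ hcw₂ hcw₁
  rw [← List.take_of_length_le (le_refl l₁.length), key,
    List.take_of_length_le (by omega)]
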